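/- arXiv:1302.6288 — 2 statements merged into one kernel-verified Lean document; each statement's English description precedes it below -/
import Mathlib

section
/- Let y = A x₀ with x₀ supported on T, and let Y be the L×(m−L) Hankel matrix with Y_{pq} = y_{p+q}. If L ≥ |T| and m − L ≥ |T|, then rank Y = |T| and the column span of Y equals the column span of A_T^L, where A_T^L is the restriction of A_T to its first L rows. -/
open Complex

noncomputable def partialFourier (m n : ℕ) : Matrix (Fin m) (Fin n) ℂ :=
  Matrix.of fun j k => Complex.exp (2 * Real.pi * Complex.I * j * k / n)

/-- The `L × (m−L)` Hankel matrix of `y`, with `Y p q = y (p+q)`. -/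
def hankel (m L : ℕ) (y : Fin m → ℂ) : Matrix (Fin L) (Fin (m - L)) ℂ :=
  Matrix.of fun p q => y ⟨p.1 + q.1, by have := p.2; have := q.2; omega⟩

open Matrix

lemma omega_inj (n : ℕ) (hn : 0 < n) :
    Function.Injective (fun k : Fin n => Complex.exp (2 * Real.pi * Complex.I * k / n)) := by
  intro k k' h
  simp only at h
  rw [Complex.exp_eq_exp_iff_exists_int] at h
  obtain ⟨z, hz⟩ := h
  have hn' : (n : ℂ) ≠ 0 := Nat.cast_ne_zero.mpr hn.ne'
  have hpi : (Real.pi : ℂ) ≠ 0 := Complex.ofReal_ne_zero.mpr Real.pi_ne_zero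
  field_simp at hz
  have h2 : (2 : ℂ) * Real.pi * Complex.I ≠ 0 := by
    simp [Complex.I_ne_zero, hpi]
  have hk : ((k : ℕ) : ℂ) = ((k' : ℕ) : ℂ) + z * n := by
    apply mul_left_cancel₀ h2
    rw [hz]; ring
  have hkr : ((k : ℕ) : ℝ) = ((k' : ℕ) : ℝ) + (z : ℝ) * n := by exact_mod_cast hk
  have hb1 : ((k : ℕ) : ℝ) < n := by exact_mod_cast k.2
  have hb2 : ((k' : ℕ) : ℝ) < n := by exact_mod_cast k'.2
  have hk0 : (0:ℝ) ≤ ((k : ℕ) : ℝ) := Nat.cast_nonneg _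
  have hk0' : (0:ℝ) ≤ ((k' : ℕ) : ℝ) := Nat.cast_nonneg _
  have hnR : (0:ℝ) < n := by exact_mod_cast hn
  have hz0 : z = 0 := by
    rcases lt_trichotomy z 0 with h | h | h
    · have : (z:ℝ) ≤ -1 := by exact_mod_cast Int.le_of_lt_add_one (by omega : z < -1 + 1)
      nlinarith
    · exact h
    · have : (1:ℝ) ≤ z := by exact_mod_cast h
      nlinarith
  rw [hz0] at hkr
  simp at hkr
  exact Fin.ext (by exact_mod_cast hkr)

lemma pF_pow (m n : ℕ) (j : Fin m) (k : Fin n) :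
    partialFourier m n j k = Complex.exp (2 * Real.pi * Complex.I * k / n) ^ (j : ℕ) := by
  rw [partialFourier, Matrix.of_apply, ← Complex.exp_nat_mul]
  congr 1
  ring

/-- If `L ≥ |T|` and `m − L ≥ |T|`, then the Hankel matrix `Y` of `y = A x₀`
(with `supp x₀ = T`) has rank `|T|`, and its column span equals the column span
of `A_T^L`, the restriction of `A_T` to its first `L` rows. -/
theorem hankel_rank_and_range (m n L : ℕ) (hmn : m ≤ n) (hL1 : 1 ≤ L) (hLm : L < m)
    (x₀ : Fin n → ℂ) (T : Finset (Fin n)) (hsupp : ∀ k, x₀ k ≠ 0 ↔ k ∈ T)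
    (y : Fin m → ℂ) (hy : y = (partialFourier m n).mulVec x₀)
    (hLT : T.card ≤ L) (hmLT : T.card ≤ m - L) :
    (hankel m L y).rank = T.card ∧
      Submodule.span ℂ (Set.range fun q : Fin (m - L) => fun p : Fin L => hankel m L y p q) =
        Submodule.span ℂ
          ((fun k => fun p : Fin L => partialFourier m n ⟨p.1, lt_trans p.2 hLm⟩ k) '' T) := by
  classical
  have hn : 0 < n := by omega
  set t := T.card with ht
  set ω : Fin n → ℂ := fun k => Complex.exp (2 * Real.pi * Complex.I * k / n) with hω
  have hωinj : Function.Injective ω := omega_inj n hn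
  set e : Fin t → Fin n := fun i => (T.orderIsoOfFin rfl i : Fin n) with he
  have heinj : Function.Injective e := fun i j hij => by
    exact (T.orderIsoOfFin rfl).injective (Subtype.ext hij)
  have hemem : ∀ i, e i ∈ T := fun i => (T.orderIsoOfFin rfl i).2
  have hesurj : ∀ k ∈ T, ∃ i, e i = k := fun k hk => by
    obtain ⟨i, hi⟩ := (T.orderIsoOfFin rfl).surjective ⟨k, hk⟩
    exact ⟨i, congrArg Subtype.val hi⟩
  set B : Matrix (Fin L) (Fin t) ℂ := Matrix.of fun p i => ω (e i) ^ (p : ℕ) with hB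
  set V : Matrix (Fin t) (Fin (m - L)) ℂ :=
    Matrix.of fun i q => x₀ (e i) * ω (e i) ^ (q : ℕ) with hV
  -- Y = B * V
  have hYBV : hankel m L y = B * V := by
    ext p q
    rw [hankel, Matrix.of_apply, hy, Matrix.mulVec, Matrix.mul_apply]
    simp only [dotProduct]
    have hsub : ∀ k : Fin n, partialFourier m n ⟨p.1 + q.1, by omega⟩ k * x₀ k =
        if k ∈ T then partialFourier m n ⟨p.1 + q.1, by omega⟩ k * x₀ k else 0 := by
      intro k
      by_cases hk : k ∈ T
      · simp [hk]
      · simp [hk, of_not_not (mt (hsupp k).mp (by simpa using hk))]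
    calc ∑ k : Fin n, partialFourier m n ⟨p.1 + q.1, by omega⟩ k * x₀ k
        = ∑ k ∈ T, partialFourier m n ⟨p.1 + q.1, by omega⟩ k * x₀ k := by
          rw [Finset.sum_congr rfl (fun k _ => hsub k), Finset.sum_ite_mem,
            Finset.univ_inter]
      _ = ∑ i : Fin t, partialFourier m n ⟨p.1 + q.1, by omega⟩ (e i) * x₀ (e i) := by
          rw [← Finset.sum_coe_sort T]
          exact (Equiv.sum_comp (T.orderIsoOfFin rfl).toEquiv
            (fun k : T => partialFourier m n ⟨p.1 + q.1, by omega⟩ k * x₀ k)).symm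
      _ = ∑ i : Fin t, B p i * V i q := by
          refine Finset.sum_congr rfl fun i _ => ?_
          rw [pF_pow, hB, hV, Matrix.of_apply, Matrix.of_apply]
          show ω (e i) ^ (p.1 + q.1) * x₀ (e i) = ω (e i) ^ p.1 * (x₀ (e i) * ω (e i) ^ q.1)
          rw [pow_add]; ring
  -- the Vandermonde matrix on the nodes ω (e i) is invertible
  have hvand : IsUnit (Matrix.vandermonde (ω ∘ e)) := by
    rw [Matrix.isUnit_iff_isUnit_det, isUnit_iff_ne_zero, Matrix.det_vandermonde_ne_zero_iff]
    exact hωinj.comp heinj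
  -- columns of B are linearly independent
  have hBli : LinearIndependent ℂ (fun i => Bᵀ i) := by
    have h1 : LinearIndependent ℂ (fun i => (Matrix.vandermonde (ω ∘ e)) i) :=
      Matrix.linearIndependent_rows_iff_isUnit.2 hvand
    have h2 : LinearIndependent ℂ (fun i p => Bᵀ i (Fin.castLE hLT p)) := by
      convert h1 using 2 with i p
      funext p; rfl
    exact h2.of_comp (LinearMap.funLeft ℂ ℂ (Fin.castLE hLT))
  -- V' : first t columns of V, invertible
  set V' : Matrix (Fin t) (Fin t) ℂ := V.submatrix id (Fin.castLE hmLT) with hV'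
  have hV'unit : IsUnit V' := by
    have hd : V' = Matrix.diagonal (fun i => x₀ (e i)) * Matrix.vandermonde (ω ∘ e) := by
      ext i j
      simp [hV', hV, Matrix.vandermonde, Matrix.mul_apply, Matrix.diagonal_apply,
        ite_mul, Finset.sum_ite_eq]
    rw [Matrix.isUnit_iff_isUnit_det, hd, Matrix.det_mul, Matrix.det_diagonal]
    refine IsUnit.mul ?_ ?_
    · rw [isUnit_iff_ne_zero]
      exact Finset.prod_ne_zero_iff.mpr fun i _ => (hsupp (e i)).mpr (hemem i)
    · rw [← Matrix.isUnit_iff_isUnit_det]; exact hvand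
  -- span of columns of Y = span of columns of B
  have hspanYB : Submodule.span ℂ (Set.range (hankel m L y)ᵀ) =
      Submodule.span ℂ (Set.range Bᵀ) := by
    apply le_antisymm
    · rw [Submodule.span_le]
      rintro _ ⟨q, rfl⟩
      have hcol : (hankel m L y)ᵀ q = B.mulVec (fun i => V i q) := by
        ext p
        rw [Matrix.transpose_apply, hYBV]
        simp [Matrix.mulVec, Matrix.mul_apply, dotProduct]
      have : (hankel m L y)ᵀ q ∈ LinearMap.range B.mulVecLin := ⟨fun i => V i q, hcol.symm⟩
      rwa [Matrix.range_mulVecLin] at this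
    · rw [Submodule.span_le]
      rintro _ ⟨i, rfl⟩
      have hdet : IsUnit V'.det := (Matrix.isUnit_iff_isUnit_det V').mp hV'unit
      have hYc : (hankel m L y).submatrix id (Fin.castLE hmLT) = B * V' := by
        ext p j
        rw [Matrix.submatrix_apply, hYBV]
        simp [hV', Matrix.mul_apply]
      have hBrec : B = (hankel m L y).submatrix id (Fin.castLE hmLT) * V'⁻¹ := by
        rw [hYc, Matrix.mul_assoc, Matrix.mul_nonsing_inv _ hdet, Matrix.mul_one]
      have hsum : Bᵀ i = ∑ j : Fin t,
          V'⁻¹ j i • (fun p : Fin L => hankel m L y p (Fin.castLE hmLT j)) := by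
        ext p
        rw [Matrix.transpose_apply, hBrec]
        simp only [Matrix.mul_apply, Matrix.submatrix_apply, id_eq, Finset.sum_apply,
          Pi.smul_apply, smul_eq_mul]
        exact Finset.sum_congr rfl fun j _ => mul_comm _ _
      rw [hsum]
      exact Submodule.sum_mem _ fun j _ => Submodule.smul_mem _ _
        (Submodule.subset_span ⟨Fin.castLE hmLT j, rfl⟩)
  -- the image set in the statement equals the set of columns of B
  have himg : ((fun k => fun p : Fin L => partialFourier m n ⟨p.1, lt_trans p.2 hLm⟩ k) '' T)
      = Set.range Bᵀ := by
    ext v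
    constructor
    · rintro ⟨k, hk, rfl⟩
      obtain ⟨i, rfl⟩ := hesurj k hk
      exact ⟨i, by
        ext p
        exact (pF_pow m n ⟨p.1, lt_trans p.2 hLm⟩ (e i)).symm⟩
    · rintro ⟨i, rfl⟩
      exact ⟨e i, hemem i, by
        ext p
        exact pF_pow m n ⟨p.1, lt_trans p.2 hLm⟩ (e i)⟩
  have hrange : (Set.range fun q : Fin (m - L) => fun p : Fin L => hankel m L y p q)
      = Set.range (hankel m L y)ᵀ := rfl
  constructor
  · rw [Matrix.rank_eq_finrank_span_cols,
      show (hankel m L y).col = (hankel m L y)ᵀ from rfl, hspanYB, finrank_span_eq_card hBli,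
      Fintype.card_fin]
  · rw [hrange, hspanYB, himg]
end

section
/- In the noiseless setting, for k ∈ Ω, the index k belongs to the true support T if and only if y does not lie in the span of the columns of A indexed by Ω \ {k}; that is, the angle between y and Ran A_{Ω\k} is nonzero precisely when k ∈ T. -/
open Complex

/-- Noiseless pruning criterion: for `k ∈ Ω`, `k` belongs to the true support `T`
iff `y` does not lie in the span of the columns of `A` indexed by `Ω \ {k}`. -/
theorem pruning_criterion_noiseless (m n : ℕ) (hmn : m ≤ n)
    (hspark : ∀ f : Fin m → Fin n, Function.Injective f →
      LinearIndependent ℂ (fun i : Fin m => fun j : Fin m => partialFourier m n j (f i)))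
    (x₀ : Fin n → ℂ) (T Ω : Finset (Fin n)) (hsupp : ∀ k, x₀ k ≠ 0 ↔ k ∈ T)
    (hTΩ : T ⊆ Ω) (hΩ : Ω.card < m)
    (y : Fin m → ℂ) (hy : y = (partialFourier m n).mulVec x₀) (hy0 : y ≠ 0) :
    ∀ k ∈ Ω, (k ∈ T ↔
      y ∉ Submodule.span ℂ
        ((fun l => fun j : Fin m => partialFourier m n j l) '' (↑(Ω.erase k)))) := by
  classical
  set A : Fin n → (Fin m → ℂ) := fun l => fun j : Fin m => partialFourier m n j l with hA
  -- there is a superset s of Ω of cardinality m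
  have hcardn : m ≤ (Finset.univ : Finset (Fin n)).card := by simpa using hmn
  obtain ⟨s, hΩs, -, hcard⟩ :=
    Finset.exists_subsuperset_card_eq (Finset.subset_univ Ω) hΩ.le hcardn
  set e := s.orderIsoOfFin hcard with he
  set f : Fin m → Fin n := fun i => (e i : Fin n) with hf
  have hfinj : Function.Injective f := by
    intro a b hab
    exact e.injective (Subtype.ext hab)
  have hLI := hspark f hfinj
  -- key linear independence fact over Ω
  have key : ∀ g : Fin n → ℂ, (∑ l ∈ Ω, g l • A l) = 0 → ∀ l ∈ Ω, g l = 0 := by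
    intro g hg l hl
    have hg' : ∀ i : Fin m, (if f i ∈ Ω then g (f i) else 0) = 0 := by
      have hsum : ∑ i : Fin m, (if f i ∈ Ω then g (f i) else 0) • A (f i) = 0 := by
        have h1 : ∑ i : Fin m, (if f i ∈ Ω then g (f i) else 0) • A (f i)
            = ∑ x : {x // x ∈ s}, (if (x : Fin n) ∈ Ω then g x else 0) • A x :=
          Fintype.sum_equiv e.toEquiv _ _ (fun i => rfl)
        have h2 : ∑ x : {x // x ∈ s}, (if (x : Fin n) ∈ Ω then g x else 0) • A x
            = ∑ x ∈ s, (if x ∈ Ω then g x else 0) • A x :=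
          Finset.sum_coe_sort s (fun x => (if x ∈ Ω then g x else 0) • A x)
        have h3 : ∑ x ∈ s, (if x ∈ Ω then g x else 0) • A x
            = ∑ x ∈ Ω, g x • A x := by
          rw [← Finset.sum_subset hΩs (fun x _ hx => by simp [hx])]
          exact Finset.sum_congr rfl (fun x hx => by simp [hx])
        rw [h1, h2, h3, hg]
      have := linearIndependent_iff'.1 hLI Finset.univ
        (fun i => if f i ∈ Ω then g (f i) else 0) hsum
      intro i; exact this i (Finset.mem_univ i)
    have hls : l ∈ s := hΩs hl
    have := hg' (e.symm ⟨l, hls⟩)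
    have hfe : f (e.symm ⟨l, hls⟩) = l := by
      simp [hf]
    rw [hfe] at this
    simpa [hl] using this
  -- y as a sum over Ω
  have hysum : y = ∑ l ∈ Ω, x₀ l • A l := by
    funext j
    rw [hy]
    have : (∑ l ∈ Ω, x₀ l • A l) j = ∑ l ∈ Ω, x₀ l * A l j := by
      simp [Finset.sum_apply]
    rw [this]
    show ∑ l : Fin n, partialFourier m n j l * x₀ l = _
    rw [← Finset.sum_subset (Finset.subset_univ Ω) (fun x _ hx => by
      have : x₀ x = 0 := by
        by_contra h
        exact hx (hTΩ ((hsupp x).1 h))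
      simp [this])]
    exact Finset.sum_congr rfl fun x _ => mul_comm _ _
  intro k hk
  constructor
  · -- k ∈ T → y ∉ span
    intro hkT hmem
    obtain ⟨c, hcsupp, hcy⟩ := (Finsupp.mem_span_image_iff_linearCombination ℂ).1 hmem
    have hcy' : (∑ l ∈ Ω, (c l) • A l) = y := by
      rw [← hcy, Finsupp.linearCombination_apply, Finsupp.sum]
      apply (Finset.sum_subset ?_ ?_).symm
      · intro x hx
        exact Finset.mem_of_mem_erase (hcsupp hx)
      · intro x _ hx
        simp [Finsupp.notMem_support_iff.1 hx]
    have hzero : (∑ l ∈ Ω, (x₀ l - c l) • A l) = 0 := by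
      simp only [sub_smul, Finset.sum_sub_distrib, hcy', ← hysum, sub_self]
    have hk0 := key _ hzero k hk
    have hck : c k = 0 := by
      by_contra h
      exact (Finset.notMem_erase k Ω) (hcsupp (Finsupp.mem_support_iff.2 h))
    rw [hck, sub_zero] at hk0
    exact ((hsupp k).2 hkT) hk0
  · -- y ∉ span → k ∈ T
    intro hmem
    by_contra hkT
    apply hmem
    have hyT : y = ∑ l ∈ T, x₀ l • A l := by
      rw [hysum, ← Finset.sum_subset hTΩ (fun x _ hx => by
        have : x₀ x = 0 := by
          by_contra h; exact hx ((hsupp x).1 h)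
        simp [this])]
    rw [hyT]
    apply Submodule.sum_mem
    intro l hl
    apply Submodule.smul_mem
    apply Submodule.subset_span
    exact ⟨l, Finset.mem_coe.mpr (Finset.mem_erase.mpr
      ⟨fun h => hkT (by rw [h] at hl; exact hl), hTΩ hl⟩), rfl⟩
end
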